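/- Let G be a finite simple graph and suppose some repeater tree T, having exactly N vertices labelled g, is a vertex-minor of G (with T regarded as a simple graph). Then the star graph on N vertices is a vertex-minor of G. -/

import Mathlib

/-- A finite simple graph with an explicit vertex set inside an ambient type `α`. -/
structure FGraph (α : Type*) where
  verts : Set α
  Adj : α → α → Prop
  symm : ∀ {a b}, Adj a b → Adj b a
  loopless : ∀ a, ¬ Adj a a
  edge_mem : ∀ {a b}, Adj a b → a ∈ verts ∧ b ∈ verts

namespace FGraph

variable {α : Type*}

/-- Local complementation at `v`: two distinct vertices are adjacent iff exactly one of
(adjacent in `G`) or (both neighbours of `v` in `G`) holds. -/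
def LC (G : FGraph α) (v : α) : FGraph α where
  verts := G.verts
  Adj a b := a ≠ b ∧ Xor' (G.Adj a b) (G.Adj v a ∧ G.Adj v b)
  symm := by
    rintro a b ⟨hne, h⟩
    refine ⟨hne.symm, ?_⟩
    rcases h with ⟨h1, h2⟩ | ⟨h1, h2⟩
    · exact Or.inl ⟨G.symm h1, fun hx => h2 ⟨hx.2, hx.1⟩⟩
    · exact Or.inr ⟨⟨h1.2, h1.1⟩, fun hx => h2 (G.symm hx)⟩
  loopless := fun a h => h.1 rfl
  edge_mem := by
    rintro a b ⟨hne, h⟩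
    rcases h with ⟨h1, _⟩ | ⟨⟨ha, hb⟩, _⟩
    · exact G.edge_mem h1
    · exact ⟨(G.edge_mem ha).2, (G.edge_mem hb).2⟩

/-- Z measurement at `v`: delete the vertex `v` together with all incident edges. -/
def ZM (G : FGraph α) (v : α) : FGraph α where
  verts := G.verts \ {v}
  Adj a b := G.Adj a b ∧ a ≠ v ∧ b ≠ v
  symm := fun h => ⟨G.symm h.1, h.2.2, h.2.1⟩
  loopless := fun a h => G.loopless a h.1
  edge_mem := by
    rintro a b ⟨h, ha, hb⟩
    exact ⟨⟨(G.edge_mem h).1, ha⟩, ⟨(G.edge_mem h).2, hb⟩⟩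

/-- X measurement at `u` with chosen neighbour `w`:
`X_u(G) = LC_w(Z_u(LC_u(LC_w(G))))`. -/
def XM (G : FGraph α) (u w : α) : FGraph α :=
  ((((G.LC w).LC u).ZM u).LC w)

/-- Y measurement at `v`: `Y_v(G) = Z_v(LC_v(G))`. -/
def YM (G : FGraph α) (v : α) : FGraph α :=
  (G.LC v).ZM v

/-- `G` is a star graph with centre `c`. -/
def IsStar (G : FGraph α) (c : α) : Prop :=
  c ∈ G.verts ∧
    ∀ a b, G.Adj a b ↔ (a ≠ b ∧ a ∈ G.verts ∧ b ∈ G.verts ∧ (a = c ∨ b = c))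

/-- `G` is a complete graph on its vertex set. -/
def IsComplete (G : FGraph α) : Prop :=
  ∀ a b, G.Adj a b ↔ (a ≠ b ∧ a ∈ G.verts ∧ b ∈ G.verts)

/-- One step of local complementation or vertex deletion. -/
inductive Step : FGraph α → FGraph α → Prop
  | lc (G : FGraph α) (v : α) : Step G (G.LC v)
  | del (G : FGraph α) (v : α) : Step G (G.ZM v)

/-- `H` is a vertex-minor of `G`: `H` is obtained from `G` by a finite sequence of
local complementations and vertex deletions. -/
def IsVertexMinor (H G : FGraph α) : Prop :=
  Relation.ReflTransGen Step G H

/-- One step of local complementation. -/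
inductive LCStep : FGraph α → FGraph α → Prop
  | lc (G : FGraph α) (v : α) : LCStep G (G.LC v)

/-- `H` is obtained from `G` by a finite sequence of local complementations. -/
def LCReach (G H : FGraph α) : Prop :=
  Relation.ReflTransGen LCStep G H

end FGraph

/-- A repeater tree: a finite rooted tree (given by a parent map together with a
depth function) whose vertices are labelled `g` (`glabel = true`) or `h`
(`glabel = false`), such that the root and all leaves are labelled `g`, every
`h`-vertex has exactly one child, and along every root-to-leaf path the labels
read `g, h, g, h, …, g, g` (i.e. every non-leaf vertex is labelled `g` exactly
when its depth is even, and every leaf is labelled `g` and lies at odd depth). -/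
structure RepeaterTree (α : Type*) where
  verts : Set α
  root : α
  parent : α → α
  depth : α → ℕ
  glabel : α → Bool
  root_mem : root ∈ verts
  finite : verts.Finite
  parent_mem : ∀ v ∈ verts, parent v ∈ verts
  parent_root : parent root = root
  reaches : ∀ v ∈ verts, ∃ n, parent^[n] v = root
  depth_root : depth root = 0
  depth_parent : ∀ v ∈ verts, v ≠ root → depth v = depth (parent v) + 1
  leaf_g : ∀ v ∈ verts, (∀ w ∈ verts, w ≠ root → parent w ≠ v) →
    glabel v = true ∧ Odd (depth v)
  nonleaf_label : ∀ v ∈ verts, (∃ w, w ∈ verts ∧ w ≠ root ∧ parent w = v) →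
    (glabel v = true ↔ Even (depth v))
  h_one_child : ∀ v ∈ verts, glabel v = false →
    ∃! w, w ∈ verts ∧ w ≠ root ∧ parent w = v

/-- The simple graph underlying a repeater tree: each non-root vertex is joined
to its parent. -/
def RepeaterTree.toFGraph {α : Type*} (T : RepeaterTree α) : FGraph α where
  verts := T.verts
  Adj a b := a ∈ T.verts ∧ b ∈ T.verts ∧ a ≠ b ∧ (T.parent a = b ∨ T.parent b = a)
  symm := fun h => ⟨h.2.1, h.1, h.2.2.1.symm, h.2.2.2.symm⟩
  loopless := fun a h => h.2.2.1 rfl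
  edge_mem := fun h => ⟨h.1, h.2.1⟩


namespace FGraph
variable {α : Type*}

section XMlemma
variable (G : FGraph α) (u p w : α)

lemma lc_adj (v a b : α) : (G.LC v).Adj a b ↔
    (a ≠ b ∧ Xor' (G.Adj a b) (G.Adj v a ∧ G.Adj v b)) := Iff.rfl

lemma zm_adj (v a b : α) : (G.ZM v).Adj a b ↔ (G.Adj a b ∧ a ≠ v ∧ b ≠ v) := Iff.rfl

variable (hpw' : p ≠ w) (hup : G.Adj u p) (huw : G.Adj u w) (hpw : ¬ G.Adj p w)
    (hdeg : ∀ x, G.Adj u x → x = p ∨ x = w)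

include hpw' hup huw hpw hdeg

lemma g3_w_adj (x : α) : ((((G.LC w).LC u).ZM u)).Adj w x ↔ (x ≠ u ∧ x ≠ w ∧ x = p) := by
  have h1 : G.Adj u x ↔ (x = p ∨ x = w) := ⟨hdeg x, by rintro (rfl|rfl) <;> assumption⟩
  have h1' : G.Adj x u ↔ (x = p ∨ x = w) :=
    ⟨fun h => hdeg x (G.symm h), fun h => G.symm (h1.2 h)⟩
  have hwu : G.Adj w u := G.symm huw
  have hpu : G.Adj p u := G.symm hup
  have hwp : ¬ G.Adj w p := fun h => hpw (G.symm h)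
  have hww : ¬ G.Adj w w := G.loopless w
  have huu : ¬ G.Adj u u := G.loopless u
  have hpp : ¬ G.Adj p p := G.loopless p
  have huw' : u ≠ w := fun h => G.loopless w (h ▸ huw)
  have hwu' : w ≠ u := huw'.symm
  have hup' : u ≠ p := fun h => G.loopless p (h ▸ hup)
  have hpu' : p ≠ u := hup'.symm
  have hwp' : w ≠ p := hpw'.symm
  by_cases hxp : x = p
  · simp [zm_adj, lc_adj, Xor', hxp, hup, hpu, huw, hwu, hpw, hwp, hww, huu, hpp,
      hpw', hwp', hup', hpu', huw', hwu']
  by_cases hxw : x = w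
  · simp [zm_adj, lc_adj, Xor', hxw, hup, hpu, huw, hwu, hpw, hwp, hww, huu, hpp,
      hpw', hwp', hup', hpu', huw', hwu']
  by_cases hxu : x = u
  · simp [zm_adj, lc_adj, Xor', hxu, hup, hpu, huw, hwu, hpw, hwp, hww, huu, hpp,
      hpw', hwp', hup', hpu', huw', hwu']
  have hwx : ¬ w = x := fun h => hxw h.symm
  have hux : ¬ u = x := fun h => hxu h.symm
  by_cases hA : G.Adj w x <;>
    simp [zm_adj, lc_adj, Xor', h1, h1', hxp, hxw, hxu, hwx, hux, hA, hup, hpu, huw, hwu,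
      hpw, hwp, hww, huu, hpp, hpw', hwp', hup', hpu', huw', hwu']

lemma g3_gen_adj (x y : α) (hxw : x ≠ w) (hyw : y ≠ w) :
    ((((G.LC w).LC u).ZM u)).Adj x y ↔ (x ≠ u ∧ y ≠ u ∧ x ≠ y ∧
      Xor' (Xor' (G.Adj x y) (G.Adj w x ∧ G.Adj w y))
           (Xor' (x = p) (G.Adj w x) ∧ Xor' (y = p) (G.Adj w y))) := by
  have h1x : G.Adj u x ↔ (x = p ∨ x = w) := ⟨hdeg x, by rintro (rfl|rfl) <;> assumption⟩
  have h1x' : G.Adj x u ↔ (x = p ∨ x = w) :=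
    ⟨fun h => hdeg x (G.symm h), fun h => G.symm (h1x.2 h)⟩
  have h1y : G.Adj u y ↔ (y = p ∨ y = w) := ⟨hdeg y, by rintro (rfl|rfl) <;> assumption⟩
  have h1y' : G.Adj y u ↔ (y = p ∨ y = w) :=
    ⟨fun h => hdeg y (G.symm h), fun h => G.symm (h1y.2 h)⟩
  have hwu : G.Adj w u := G.symm huw
  have hpu : G.Adj p u := G.symm hup
  have hwp : ¬ G.Adj w p := fun h => hpw (G.symm h)
  have hww : ¬ G.Adj w w := G.loopless w
  have huu : ¬ G.Adj u u := G.loopless u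
  have hpp : ¬ G.Adj p p := G.loopless p
  have huw' : u ≠ w := fun h => G.loopless w (h ▸ huw)
  have hwu' : w ≠ u := huw'.symm
  have hup' : u ≠ p := fun h => G.loopless p (h ▸ hup)
  have hpu' : p ≠ u := hup'.symm
  have hwp' : w ≠ p := hpw'.symm
  have hwx : ¬ w = x := fun h => hxw h.symm
  have hwy : ¬ w = y := fun h => hyw h.symm
  have hsxy : G.Adj y x ↔ G.Adj x y := ⟨G.symm, G.symm⟩
  by_cases hxu : x = u
  · simp [zm_adj, lc_adj, Xor', hxu, h1x, h1x', h1y, h1y', hup, hpu, huw, hwu, hpw, hwp,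
      hww, huu, hpp, hpw', hwp', hup', hpu', huw', hwu', hwx, hwy, hxw, hyw]
  by_cases hyu : y = u
  · simp [zm_adj, lc_adj, Xor', hyu, h1x, h1x', h1y, h1y', hup, hpu, huw, hwu, hpw, hwp,
      hww, huu, hpp, hpw', hwp', hup', hpu', huw', hwu', hwx, hwy, hxw, hyw]
  have hux : ¬ u = x := fun h => hxu h.symm
  have huy : ¬ u = y := fun h => hyu h.symm
  by_cases hxy : x = y
  · by_cases hA1 : G.Adj w y <;> by_cases hA3 : G.Adj y y <;>
      simp [zm_adj, lc_adj, Xor', hxy, h1x, h1x', h1y, h1y', hA1, hA3, hup, hpu, huw, hwu,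
        hpw, hwp, hww, huu, hpp, hpw', hwp', hup', hpu', huw', hwu', hwx, hwy, hxw, hyw,
        hxu, hyu, hux, huy] <;> exact fun h => Or.inl h
  by_cases hxp : x = p <;> by_cases hyp2 : y = p <;>
    by_cases hA1 : G.Adj w x <;> by_cases hA2 : G.Adj w y <;> by_cases hA3 : G.Adj x y <;>
    simp [zm_adj, lc_adj, Xor', xor_def, hsxy, h1x, h1x', h1y, h1y', hxp, hyp2, hA1, hA2, hA3, hup,
      hpu, huw, hwu, hpw, hwp, hww, huu, hpp, hpw', hwp', hup', hpu', huw', hwu', hwx, hwy,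
      hxw, hyw, hxu, hyu, hux, huy, hxy] <;> exact fun h => Or.inl h

lemma xm_adj (a b : α) :
    (G.XM u w).Adj a b ↔ (a ≠ b ∧ a ≠ u ∧ b ≠ u ∧
      ((a = p ∧ b = w) ∨ (a = w ∧ b = p) ∨
       (a = p ∧ b ≠ w ∧ Xor' (G.Adj p b) (G.Adj w b)) ∨
       (b = p ∧ a ≠ w ∧ Xor' (G.Adj p a) (G.Adj w a)) ∨
       (a ≠ p ∧ b ≠ p ∧ a ≠ w ∧ b ≠ w ∧ G.Adj a b))) := by
  have huw' : u ≠ w := fun h => G.loopless w (h ▸ huw)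
  have hwu' : w ≠ u := huw'.symm
  have hup' : u ≠ p := fun h => G.loopless p (h ▸ hup)
  have hpu' : p ≠ u := hup'.symm
  have hwp' : w ≠ p := hpw'.symm
  have hwp : ¬ G.Adj w p := fun h => hpw (G.symm h)
  have hW := g3_w_adj G u p w hpw' hup huw hpw hdeg
  have h3s : ∀ x y, ((((G.LC w).LC u).ZM u)).Adj x y ↔ ((((G.LC w).LC u).ZM u)).Adj y x :=
    fun x y => ⟨(((G.LC w).LC u).ZM u).symm, (((G.LC w).LC u).ZM u).symm⟩
  have hsab : G.Adj b a ↔ G.Adj a b := ⟨G.symm, G.symm⟩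
  have hspa : G.Adj a p ↔ G.Adj p a := ⟨G.symm, G.symm⟩
  have hspb : G.Adj b p ↔ G.Adj p b := ⟨G.symm, G.symm⟩
  have hswa : G.Adj a w ↔ G.Adj w a := ⟨G.symm, G.symm⟩
  have hswb : G.Adj b w ↔ G.Adj w b := ⟨G.symm, G.symm⟩
  show ((((G.LC w).LC u).ZM u).LC w).Adj a b ↔ _
  rw [lc_adj, hW a, hW b]
  by_cases haw : a = w
  · rw [show ((((G.LC w).LC u).ZM u)).Adj a b ↔ (b ≠ u ∧ b ≠ w ∧ b = p) from haw ▸ hW b]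
    by_cases hbp : b = p <;> by_cases hbu : b = u <;> by_cases hbw : b = w <;>
      simp [Xor', xor_def, haw, hbp, hbu, hbw, hup', hpu', huw', hwu', hpw', hwp', hpw, hwp,
        G.loopless, hsab, hspa, hspb, hswa, hswb] <;>
      tauto
  by_cases hbw : b = w
  · rw [h3s a b, show ((((G.LC w).LC u).ZM u)).Adj b a ↔ (a ≠ u ∧ a ≠ w ∧ a = p) from
      hbw ▸ hW a]
    by_cases hap : a = p <;> by_cases hau : a = u <;>
      simp [Xor', xor_def, hbw, hap, hau, haw, hup', hpu', huw', hwu', hpw', hwp', hpw, hwp,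
        G.loopless, hsab, hspa, hspb, hswa, hswb] <;>
      tauto
  rw [g3_gen_adj G u p w hpw' hup huw hpw hdeg a b haw hbw]
  have hwa : ¬ w = a := fun h => haw h.symm
  have hwb : ¬ w = b := fun h => hbw h.symm
  by_cases hab : a = b
  · by_cases hA1 : G.Adj w b <;> by_cases hbp : b = p <;> by_cases hbu : b = u <;>
      simp [Xor', xor_def, hab, hA1, hbp, hbu, haw, hbw, hwa, hwb, hup', hpu', huw', hwu', hpw',
        hwp', hpw, hwp, G.loopless, hsab, hspa, hspb, hswa, hswb] <;>
      tauto
  by_cases hap : a = p <;> by_cases hbp : b = p <;>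
    by_cases hau : a = u <;> by_cases hbu : b = u <;>
    by_cases hA1 : G.Adj w a <;> by_cases hA2 : G.Adj w b <;> by_cases hA3 : G.Adj a b <;>
    simp [Xor', xor_def, hab, hap, hbp, hau, hbu, hA1, hA2, hA3, haw, hbw, hwa, hwb, hup', hpu',
      huw', hwu', hpw', hwp', hpw, hwp, G.loopless, hsab, hspa, hspb, hswa, hswb] <;>
    tauto

end XMlemma
end FGraph

namespace FGraph
variable {α : Type*}

protected lemma ext' {G H : FGraph α} (hv : G.verts = H.verts)
    (ha : ∀ a b, G.Adj a b ↔ H.Adj a b) : G = H := by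
  cases G with | mk v1 a1 s1 l1 e1 =>
  cases H with | mk v2 a2 s2 l2 e2 =>
  obtain rfl : v1 = v2 := hv
  obtain rfl : a1 = a2 := funext fun a => funext fun b => propext (ha a b)
  rfl

lemma isVertexMinor_trans {H K G : FGraph α} (h1 : IsVertexMinor H K)
    (h2 : IsVertexMinor K G) : IsVertexMinor H G :=
  Relation.ReflTransGen.trans h2 h1

lemma isVertexMinor_xm (G : FGraph α) (u w : α) : IsVertexMinor (G.XM u w) G :=
  Relation.ReflTransGen.tail
    (Relation.ReflTransGen.tail
      (Relation.ReflTransGen.tail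
        (Relation.ReflTransGen.tail Relation.ReflTransGen.refl (Step.lc G w))
        (Step.lc _ u))
      (Step.del _ u))
    (Step.lc _ w)

end FGraph

namespace RepeaterTree
variable {α : Type*} (T : RepeaterTree α)

lemma parent_fix {v : α} (hv : v ∈ T.verts) (h : T.parent v = v) : v = T.root := by
  obtain ⟨n, hn⟩ := T.reaches v hv
  rw [Function.iterate_fixed h n] at hn
  exact hn

lemma glabel_root : T.glabel T.root = true := by
  by_cases hex : ∃ w, w ∈ T.verts ∧ w ≠ T.root ∧ T.parent w = T.root
  · exact (T.nonleaf_label T.root T.root_mem hex).2 (by rw [T.depth_root]; exact Even.zero)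
  · exact (T.leaf_g T.root T.root_mem (fun w hw hwr hp => hex ⟨w, hw, hwr, hp⟩)).1

lemma parent_ne_self {v : α} (hv : v ∈ T.verts) (hvr : v ≠ T.root) : T.parent v ≠ v :=
  fun h => hvr (T.parent_fix hv h)

/-- In a repeater tree with no `h`-labelled vertices, every non-root vertex is a
child of the root. -/
lemma allg_child_root (hall : ∀ v ∈ T.verts, T.glabel v = true)
    {v : α} (hv : v ∈ T.verts) (hvr : v ≠ T.root) : T.parent v = T.root := by
  by_contra hm
  set m := T.parent v with hmdef
  have hmv : m ∈ T.verts := T.parent_mem v hv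
  have hglm : T.glabel m = true := hall m hmv
  have hmE : Even (T.depth m) :=
    (T.nonleaf_label m hmv ⟨v, hv, hvr, rfl⟩).1 hglm
  have hmr : m ≠ T.root := hm
  have hdm : T.depth m = T.depth (T.parent m) + 1 := T.depth_parent m hmv hmr
  set q := T.parent m with hqdef
  have hqv : q ∈ T.verts := T.parent_mem m hmv
  have hqO : Odd (T.depth q) := by
    rw [Nat.even_iff] at hmE
    rw [Nat.odd_iff]
    omega
  have hqr : q ≠ T.root := by
    intro h
    rw [h, T.depth_root] at hqO
    simp [Nat.odd_iff] at hqO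
  have : T.glabel q = true := hall q hqv
  have := (T.nonleaf_label q hqv ⟨m, hmv, hmr, rfl⟩).1 this
  exact (Nat.not_odd_iff_even.2 this) hqO

end RepeaterTree

open scoped Classical in
lemma RepeaterTree.step {α : Type*} (T : RepeaterTree α) (u : α) (hu : u ∈ T.verts)
    (hgl : T.glabel u = false)
    (hmax : ∀ v ∈ T.verts, T.glabel v = false → T.depth v ≤ T.depth u) :
    ∃ T' : RepeaterTree α, T'.verts = T.verts \ {u} ∧ T'.root = T.root ∧
      T'.glabel = T.glabel ∧ FGraph.IsVertexMinor T'.toFGraph T.toFGraph := by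
  have hur : u ≠ T.root := fun h => by rw [h, T.glabel_root] at hgl; exact Bool.noConfusion hgl
  obtain ⟨c, ⟨hcv, hcr, hcp⟩, hcuniq⟩ := T.h_one_child u hu hgl
  set p := T.parent u with hpdef
  have hpv : p ∈ T.verts := T.parent_mem u hu
  have du : T.depth u = T.depth p + 1 := T.depth_parent u hu hur
  have hOdd : Odd (T.depth u) := by
    have h := T.nonleaf_label u hu ⟨c, hcv, hcr, hcp⟩
    rw [Nat.odd_iff]
    have : ¬ Even (T.depth u) := fun he => by rw [h.2 he] at hgl; exact Bool.noConfusion hgl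
    rw [Nat.even_iff] at this; omega
  have dc : T.depth c = T.depth u + 1 := by
    have := T.depth_parent c hcv hcr; rwa [hcp] at this
  have hcu : c ≠ u := fun h => by rw [h] at dc; omega
  have hpu : p ≠ u := fun h => by rw [← h] at du; omega
  have hpc : p ≠ c := fun h => by rw [← h] at dc; omega
  have hchildu : ∀ x ∈ T.verts, T.parent x = u → x = c := by
    intro x hx hxp
    by_cases hxr : x = T.root
    · exact absurd (show u = T.root by rw [← hxp, hxr, T.parent_root]) hur
    · exact hcuniq x ⟨hx, hxr, hxp⟩
  have hparpc : T.parent p ≠ c := by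
    by_cases hpr : p = T.root
    · rw [hpr, T.parent_root]; exact fun h => hcr h.symm
    · intro h
      have := T.depth_parent p hpv hpr
      rw [h, dc] at this
      omega
  have hLroot : ∀ ℓ ∈ T.verts, T.parent ℓ = c → ℓ ≠ T.root := by
    intro ℓ _ hℓ hr
    rw [hr, T.parent_root] at hℓ
    exact hcr hℓ.symm
  have hLdepth : ∀ ℓ ∈ T.verts, T.parent ℓ = c → T.depth ℓ = T.depth u + 2 := by
    intro ℓ hℓv hℓ
    have := T.depth_parent ℓ hℓv (hLroot ℓ hℓv hℓ)
    rw [hℓ, dc] at this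
    omega
  have hLleaf : ∀ ℓ ∈ T.verts, T.parent ℓ = c → ∀ x ∈ T.verts, T.parent x ≠ ℓ := by
    intro ℓ hℓv hℓ x hxv hx
    by_cases hxr : x = T.root
    · rw [hxr, T.parent_root] at hx
      exact hLroot ℓ hℓv hℓ hx.symm
    · have hnl := T.nonleaf_label ℓ hℓv ⟨x, hxv, hxr, hx⟩
      have hglℓ : T.glabel ℓ = false := by
        rcases Bool.eq_false_or_eq_true (T.glabel ℓ) with h | h
        swap
        · exact h
        · exfalso
          have hE := hnl.1 h
          rw [hLdepth ℓ hℓv hℓ, Nat.even_iff] at hE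
          rw [Nat.odd_iff] at hOdd
          omega
      have := hmax ℓ hℓv hglℓ
      rw [hLdepth ℓ hℓv hℓ] at this
      omega
  have hLg : ∀ ℓ ∈ T.verts, T.parent ℓ = c → T.glabel ℓ = true := by
    intro ℓ hℓv hℓ
    exact (T.leaf_g ℓ hℓv (fun w hw _ => hLleaf ℓ hℓv hℓ w hw)).1
  have hcE : Even (T.depth c) := by
    rw [dc, Nat.even_iff]; rw [Nat.odd_iff] at hOdd; omega
  have hcnl : ∃ w, w ∈ T.verts ∧ w ≠ T.root ∧ T.parent w = c := by
    by_contra hcon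
    push_neg at hcon
    have := (T.leaf_g c hcv (fun w hw hwr => hcon w hw hwr)).2
    rw [Nat.odd_iff] at this
    rw [Nat.even_iff] at hcE
    omega
  have hgc : T.glabel c = true := (T.nonleaf_label c hcv hcnl).2 hcE
  have hglp : T.glabel p = true := by
    refine (T.nonleaf_label p hpv ⟨u, hu, hur, hpdef.symm⟩).2 ?_
    rw [Nat.odd_iff] at hOdd; rw [Nat.even_iff]; omega
  have hvne : ∀ {x : α}, x ≠ u → x ∈ T.verts → x ∈ T.verts \ {u} :=
    fun hx hxv => ⟨hxv, fun h => hx (by simpa using h)⟩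
  have hadj_up : T.toFGraph.Adj u p := ⟨hu, hpv, fun h => hpu h.symm, Or.inl hpdef.symm⟩
  have hadj_uc : T.toFGraph.Adj u c := ⟨hu, hcv, fun h => hcu h.symm, Or.inr hcp⟩
  have hnadj_pc : ¬ T.toFGraph.Adj p c := by
    rintro ⟨_, _, hne, h | h⟩
    · exact hparpc h
    · rw [hcp] at h; exact hpu h.symm
  have hdeg : ∀ x, T.toFGraph.Adj u x → x = p ∨ x = c := by
    rintro x ⟨_, hxv, _, h | h⟩
    · exact Or.inl h.symm
    · exact Or.inr (hchildu x hxv h)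
  set pf : α → α := fun v => if v = c ∨ T.parent v = c then p else T.parent v with hpf
  set df : α → ℕ := fun v => if v = c ∨ T.parent v = c then T.depth u else T.depth v with hdf
  have hPu : ¬(u = c ∨ T.parent u = c) := by rintro (h | h); exacts [hcu h.symm, hpc h]
  have hPp : ¬(p = c ∨ T.parent p = c) := by rintro (h | h); exacts [hpc h, hparpc h]
  have hPr : ¬(T.root = c ∨ T.parent T.root = c) := by
    rw [T.parent_root]; rintro (h | h) <;> exact hcr h.symm
  -- structure fields
  have f_root_mem : T.root ∈ T.verts \ {u} := hvne (fun h => hur h.symm) T.root_mem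
  have f_finite : (T.verts \ {u}).Finite := T.finite.subset Set.diff_subset
  have f_parent_mem : ∀ v ∈ T.verts \ {u}, pf v ∈ T.verts \ {u} := by
    intro v hv
    by_cases hP : v = c ∨ T.parent v = c
    · rw [hpf]; simp only [if_pos hP]; exact hvne hpu hpv
    · rw [hpf]; simp only [if_neg hP]
      refine hvne (fun h => hP (Or.inl (hchildu v hv.1 h))) (T.parent_mem v hv.1)
  have f_parent_root : pf T.root = T.root := by
    rw [hpf]; simp only [if_neg hPr]; exact T.parent_root
  have f_reaches : ∀ v ∈ T.verts \ {u}, ∃ n, pf^[n] v = T.root := by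
    have key : ∀ n w, w ∈ T.verts → w ≠ u → T.depth w ≤ n → ∃ m, pf^[m] w = T.root := by
      intro n
      induction n with
      | zero =>
        intro w hw hwu hd
        by_cases hwr : w = T.root
        · exact ⟨0, hwr⟩
        · exfalso; have := T.depth_parent w hw hwr; omega
      | succ n ih =>
        intro w hw hwu hd
        by_cases hwr : w = T.root
        · exact ⟨0, hwr⟩
        by_cases hP : w = c ∨ T.parent w = c
        · have hdp : T.depth p < T.depth w := by
            rcases hP with h | h
            · rw [h, dc]; omega
            · rw [hLdepth w hw h]; omega
          obtain ⟨m, hm⟩ := ih p hpv hpu (by omega)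
          refine ⟨m + 1, ?_⟩
          rw [Function.iterate_succ_apply]
          rw [show pf w = p by rw [hpf]; simp only [if_pos hP]]
          exact hm
        · have hdd := T.depth_parent w hw hwr
          have hpwu : T.parent w ≠ u := fun h => hP (Or.inl (hchildu w hw h))
          obtain ⟨m, hm⟩ := ih (T.parent w) (T.parent_mem w hw) hpwu (by omega)
          refine ⟨m + 1, ?_⟩
          rw [Function.iterate_succ_apply]
          rw [show pf w = T.parent w by rw [hpf]; simp only [if_neg hP]]
          exact hm
    intro v hv
    exact key (T.depth v) v hv.1 (fun h => (by simpa [h] using hv.2 : False)) le_rfl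
  have f_depth_root : df T.root = 0 := by
    rw [hdf]; simp only [if_neg hPr]; exact T.depth_root
  have f_depth_parent : ∀ v ∈ T.verts \ {u}, v ≠ T.root → df v = df (pf v) + 1 := by
    intro v hv hvr
    by_cases hP : v = c ∨ T.parent v = c
    · rw [hpf, hdf]; simp only [if_pos hP, if_neg hPp]; exact du
    · have hPpar : ¬(T.parent v = c ∨ T.parent (T.parent v) = c) := by
        rintro (h | h)
        · exact hP (Or.inr h)
        · exact hLleaf (T.parent v) (T.parent_mem v hv.1) h v hv.1 rfl
      rw [hpf, hdf]; simp only [if_neg hP, if_neg hPpar]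
      exact T.depth_parent v hv.1 hvr
  have f_leaf_g : ∀ v ∈ T.verts \ {u},
      (∀ w ∈ T.verts \ {u}, w ≠ T.root → pf w ≠ v) → T.glabel v = true ∧ Odd (df v) := by
    intro v hv hleaf
    by_cases hP : v = c ∨ T.parent v = c
    · constructor
      · rcases hP with h | h
        · rw [h]; exact hgc
        · exact hLg v hv.1 h
      · rw [hdf]; simp only [if_pos hP]; exact hOdd
    · by_cases hvp : v = p
      · exfalso
        refine hleaf c (hvne hcu hcv) hcr ?_
        rw [hpf]; simp only [if_pos (Or.inl rfl)]; exact hvp.symm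
      · have hTleaf : ∀ w ∈ T.verts, w ≠ T.root → T.parent w ≠ v := by
          intro w hw hwr hpw
          by_cases hwu : w = u
          · rw [hwu, ← hpdef] at hpw; exact hvp hpw.symm
          · have hPw : ¬(w = c ∨ T.parent w = c) := by
              rintro (h | h)
              · rw [h, hcp] at hpw
                exact (by simpa [← hpw] using hv.2 : False)
              · rw [h] at hpw; exact hP (Or.inl hpw.symm)
            refine hleaf w (hvne hwu hw) hwr ?_
            rw [hpf]; simp only [if_neg hPw]; exact hpw
        have := T.leaf_g v hv.1 hTleaf
        rw [hdf]; simp only [if_neg hP]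
        exact this
  have f_nonleaf : ∀ v ∈ T.verts \ {u},
      (∃ w, w ∈ T.verts \ {u} ∧ w ≠ T.root ∧ pf w = v) → (T.glabel v = true ↔ Even (df v)) := by
    rintro v hv ⟨w, hw, hwr, hpw⟩
    by_cases hPw : w = c ∨ T.parent w = c
    · rw [hpf] at hpw; simp only [if_pos hPw] at hpw
      rw [← hpw, hdf]; simp only [if_neg hPp]
      exact T.nonleaf_label p hpv ⟨u, hu, hur, hpdef.symm⟩
    · rw [hpf] at hpw; simp only [if_neg hPw] at hpw
      have hPv : ¬(v = c ∨ T.parent v = c) := by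
        rintro (h | h)
        · rw [h] at hpw; exact hPw (Or.inr hpw)
        · exact hLleaf v hv.1 h w hw.1 hpw
      rw [hdf]; simp only [if_neg hPv]
      exact T.nonleaf_label v hv.1 ⟨w, hw.1, hwr, hpw⟩
  have f_onechild : ∀ v ∈ T.verts \ {u}, T.glabel v = false →
      ∃! w, w ∈ T.verts \ {u} ∧ w ≠ T.root ∧ pf w = v := by
    intro v hv hglv
    have hvu : v ≠ u := fun h => (by simpa [h] using hv.2 : False)
    have hvp : v ≠ p := fun h => by rw [h, hglp] at hglv; exact Bool.noConfusion hglv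
    have hvc : v ≠ c := fun h => by rw [h, hgc] at hglv; exact Bool.noConfusion hglv
    obtain ⟨w, ⟨hwv, hwr, hwp⟩, hwuniq⟩ := T.h_one_child v hv.1 hglv
    have hwu : w ≠ u := fun h => hvp (by rw [h, ← hpdef] at hwp; exact hwp.symm)
    have hPw : ¬(w = c ∨ T.parent w = c) := by
      rintro (h | h)
      · rw [h, hcp] at hwp; exact hvu hwp.symm
      · rw [h] at hwp; exact hvc hwp.symm
    refine ⟨w, ⟨hvne hwu hwv, hwr, by rw [hpf]; simp only [if_neg hPw]; exact hwp⟩, ?_⟩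
    rintro x ⟨hx, hxr, hxp⟩
    by_cases hPx : x = c ∨ T.parent x = c
    · rw [hpf] at hxp; simp only [if_pos hPx] at hxp
      exact absurd hxp.symm hvp
    · rw [hpf] at hxp; simp only [if_neg hPx] at hxp
      exact hwuniq x ⟨hx.1, hxr, hxp⟩
  refine ⟨⟨T.verts \ {u}, T.root, pf, df, T.glabel, f_root_mem, f_finite, f_parent_mem,
    f_parent_root, f_reaches, f_depth_root, f_depth_parent, f_leaf_g, f_nonleaf,
    f_onechild⟩, rfl, rfl, rfl, ?_⟩
  have hnadj_pL : ∀ ℓ ∈ T.verts, T.parent ℓ = c → ¬ T.toFGraph.Adj p ℓ := by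
    rintro ℓ hℓv hℓ ⟨_, _, hne, h | h⟩
    · exact hLleaf ℓ hℓv hℓ p hpv h
    · rw [hℓ] at h; exact hpc h.symm
  have hadj_cL : ∀ ℓ ∈ T.verts, T.parent ℓ = c → T.toFGraph.Adj c ℓ := by
    intro ℓ hℓv hℓ
    refine ⟨hcv, hℓv, fun h => ?_, Or.inr hℓ⟩
    exact hLroot ℓ hℓv hℓ (T.parent_fix hℓv (by rw [hℓ, h]))
  have hadj_c_iff : ∀ x, x ≠ u → (T.toFGraph.Adj c x ↔ (x ∈ T.verts ∧ T.parent x = c)) := by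
    intro x hxu
    constructor
    · rintro ⟨_, hxv, _, h | h⟩
      · rw [hcp] at h; exact (hxu h.symm).elim
      · exact ⟨hxv, h⟩
    · rintro ⟨hxv, hx⟩
      exact hadj_cL x hxv hx
  have hEq : RepeaterTree.toFGraph ⟨T.verts \ {u}, T.root, pf, df, T.glabel, f_root_mem,
      f_finite, f_parent_mem, f_parent_root, f_reaches, f_depth_root, f_depth_parent,
      f_leaf_g, f_nonleaf, f_onechild⟩ = T.toFGraph.XM u c := by
    apply FGraph.ext'
    · rfl
    · intro a b
      rw [FGraph.xm_adj T.toFGraph u p c hpc hadj_up hadj_uc hnadj_pc hdeg a b]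
      show (a ∈ T.verts \ {u} ∧ b ∈ T.verts \ {u} ∧ a ≠ b ∧ (pf a = b ∨ pf b = a)) ↔ _
      constructor
      · rintro ⟨⟨hav, hau⟩, ⟨hbv, hbu⟩, hab, h | h⟩
        · refine ⟨hab, (by simpa using hau), (by simpa using hbu), ?_⟩
          by_cases hPa : a = c ∨ T.parent a = c
          · rw [hpf] at h; simp only [if_pos hPa] at h
            by_cases hac : a = c
            · exact Or.inr (Or.inl ⟨hac, h.symm⟩)
            · have haL : T.parent a = c := hPa.resolve_left hac
              exact Or.inr (Or.inr (Or.inr (Or.inl ⟨h.symm, hac,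
                Or.inr ⟨hadj_cL a hav haL, hnadj_pL a hav haL⟩⟩)))
          · rw [hpf] at h; simp only [if_neg hPa] at h
            push_neg at hPa
            by_cases hap : a = p
            · by_cases hbc : b = c
              · exact Or.inl ⟨hap, hbc⟩
              · refine Or.inr (Or.inr (Or.inl ⟨hap, hbc, Or.inl ⟨?_, ?_⟩⟩))
                · exact ⟨hpv, hbv, by rw [← hap]; exact hab, Or.inl (by rw [← hap]; exact h)⟩
                · intro hAcb
                  obtain ⟨hbv', hbL⟩ := (hadj_c_iff b (by simpa using hbu)).1 hAcb
                  exact hLleaf b hbv' hbL p hpv (by rw [← hap]; exact h)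
            · by_cases hbp : b = p
              · refine Or.inr (Or.inr (Or.inr (Or.inl ⟨hbp, hPa.1, Or.inl ⟨?_, ?_⟩⟩)))
                · exact ⟨hpv, hav, fun hh => hap hh.symm, Or.inr (by rw [← hbp]; exact h)⟩
                · intro hAca
                  obtain ⟨_, haL⟩ := (hadj_c_iff a (by simpa using hau)).1 hAca
                  exact hPa.2 haL
              · refine Or.inr (Or.inr (Or.inr (Or.inr ⟨hap, hbp, hPa.1,
                  fun hbc => hPa.2 (by rw [← hbc]; exact h), ⟨hav, hbv, hab, Or.inl h⟩⟩)))
        · refine ⟨hab, (by simpa using hau), (by simpa using hbu), ?_⟩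
          by_cases hPb : b = c ∨ T.parent b = c
          · rw [hpf] at h; simp only [if_pos hPb] at h
            by_cases hbc : b = c
            · exact Or.inl ⟨h.symm, hbc⟩
            · have hbL : T.parent b = c := hPb.resolve_left hbc
              exact Or.inr (Or.inr (Or.inl ⟨h.symm, hbc,
                Or.inr ⟨hadj_cL b hbv hbL, hnadj_pL b hbv hbL⟩⟩))
          · rw [hpf] at h; simp only [if_neg hPb] at h
            push_neg at hPb
            by_cases hbp : b = p
            · by_cases hac : a = c
              · exact Or.inr (Or.inl ⟨hac, hbp⟩)
              · refine Or.inr (Or.inr (Or.inr (Or.inl ⟨hbp, hac, Or.inl ⟨?_, ?_⟩⟩)))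
                · exact ⟨hpv, hav, by rw [← hbp]; exact hab.symm, Or.inl (by rw [← hbp]; exact h)⟩
                · intro hAca
                  obtain ⟨hav', haL⟩ := (hadj_c_iff a (by simpa using hau)).1 hAca
                  exact hLleaf a hav' haL p hpv (by rw [← hbp]; exact h)
            · by_cases hap : a = p
              · refine Or.inr (Or.inr (Or.inl ⟨hap, hPb.1, Or.inl ⟨?_, ?_⟩⟩))
                · exact ⟨hpv, hbv, fun hh => hbp hh.symm, Or.inr (by rw [← hap]; exact h)⟩
                · intro hAcb
                  obtain ⟨_, hbL⟩ := (hadj_c_iff b (by simpa using hbu)).1 hAcb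
                  exact hPb.2 hbL
              · refine Or.inr (Or.inr (Or.inr (Or.inr ⟨hap, hbp,
                  fun hac => hPb.2 (by rw [← hac]; exact h), hPb.1,
                  ⟨hav, hbv, hab, Or.inr h⟩⟩)))
      · rintro ⟨hab, hau, hbu, H⟩
        rcases H with ⟨hap, hbc⟩ | ⟨hac, hbp⟩ | ⟨hap, hbc, hx⟩ | ⟨hbp, hac, hx⟩ |
          ⟨hap, hbp, hac, hbc, hA⟩
        · refine ⟨by rw [hap]; exact hvne hpu hpv, by rw [hbc]; exact hvne hcu hcv, hab,
            Or.inr ?_⟩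
          rw [hbc, hap, hpf]; exact if_pos (Or.inl rfl)
        · refine ⟨by rw [hac]; exact hvne hcu hcv, by rw [hbp]; exact hvne hpu hpv, hab,
            Or.inl ?_⟩
          rw [hac, hbp, hpf]; exact if_pos (Or.inl rfl)
        · rcases hx with ⟨hA, hnB⟩ | ⟨hB, hnA⟩
          · obtain ⟨_, hbv, hnpb, h | h⟩ := hA
            · refine ⟨by rw [hap]; exact hvne hpu hpv, hvne hbu hbv, hab, Or.inl ?_⟩
              rw [hap, hpf]; simp only [if_neg hPp]; exact h
            · have hPb : ¬(b = c ∨ T.parent b = c) := by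
                rintro (hh | hh)
                · exact hbc hh
                · rw [hh] at h; exact hpc h.symm
              refine ⟨by rw [hap]; exact hvne hpu hpv, hvne hbu hbv, hab, Or.inr ?_⟩
              rw [hap, hpf]; simp only [if_neg hPb]; exact h
          · obtain ⟨hbv, hbL⟩ := (hadj_c_iff b hbu).1 hB
            refine ⟨by rw [hap]; exact hvne hpu hpv, hvne hbu hbv, hab, Or.inr ?_⟩
            rw [hap, hpf]; exact if_pos (Or.inr hbL)
        · rcases hx with ⟨hA, hnB⟩ | ⟨hB, hnA⟩
          · obtain ⟨_, hav, hnpa, h | h⟩ := hA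
            · refine ⟨hvne hau hav, by rw [hbp]; exact hvne hpu hpv, hab, Or.inr ?_⟩
              rw [hbp, hpf]; simp only [if_neg hPp]; exact h
            · have hPa : ¬(a = c ∨ T.parent a = c) := by
                rintro (hh | hh)
                · exact hac hh
                · rw [hh] at h; exact hpc h.symm
              refine ⟨hvne hau hav, by rw [hbp]; exact hvne hpu hpv, hab, Or.inl ?_⟩
              rw [hbp, hpf]; simp only [if_neg hPa]; exact h
          · obtain ⟨hav, haL⟩ := (hadj_c_iff a hau).1 hB
            refine ⟨hvne hau hav, by rw [hbp]; exact hvne hpu hpv, hab, Or.inl ?_⟩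
            rw [hbp, hpf]; exact if_pos (Or.inr haL)
        · obtain ⟨hav, hbv, _, h | h⟩ := hA
          · have hPa : ¬(a = c ∨ T.parent a = c) := by
              rintro (hh | hh)
              · exact hac hh
              · rw [hh] at h; exact hbc h.symm
            refine ⟨hvne hau hav, hvne hbu hbv, hab, Or.inl ?_⟩
            rw [hpf]; simp only [if_neg hPa]; exact h
          · have hPb : ¬(b = c ∨ T.parent b = c) := by
              rintro (hh | hh)
              · exact hbc hh
              · rw [hh] at h; exact hac h.symm
            refine ⟨hvne hau hav, hvne hbu hbv, hab, Or.inr ?_⟩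
            rw [hpf]; simp only [if_neg hPb]; exact h
  rw [hEq]
  exact FGraph.isVertexMinor_xm T.toFGraph u c

lemma RepeaterTree.star_minor {α : Type*} : ∀ (n : ℕ) (T : RepeaterTree α),
    {v ∈ T.verts | T.glabel v = false}.ncard = n →
    ∃ H : FGraph α, FGraph.IsVertexMinor H T.toFGraph ∧ H.IsStar T.root ∧
      H.verts = {v ∈ T.verts | T.glabel v = true} := by
  intro n
  induction n with
  | zero =>
    intro T hn
    have hfin : {v ∈ T.verts | T.glabel v = false}.Finite :=
      T.finite.subset (Set.sep_subset _ _)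
    have hempty := (Set.ncard_eq_zero hfin).1 hn
    have hall : ∀ v ∈ T.verts, T.glabel v = true := by
      intro v hv
      rcases Bool.eq_false_or_eq_true (T.glabel v) with h | h
      · exact h
      · exfalso
        have hmem : v ∈ {v ∈ T.verts | T.glabel v = false} := ⟨hv, h⟩
        rw [hempty] at hmem
        exact hmem
    refine ⟨T.toFGraph, Relation.ReflTransGen.refl, ⟨T.root_mem, ?_⟩, ?_⟩
    · intro a b
      constructor
      · rintro ⟨hav, hbv, hab, h | h⟩
        · refine ⟨hab, hav, hbv, ?_⟩
          by_cases har : a = T.root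
          · exact Or.inl har
          · exact Or.inr (by rw [← h]; exact T.allg_child_root hall hav har)
        · refine ⟨hab, hav, hbv, ?_⟩
          by_cases hbr : b = T.root
          · exact Or.inr hbr
          · exact Or.inl (by rw [← h]; exact T.allg_child_root hall hbv hbr)
      · rintro ⟨hab, hav, hbv, har | hbr⟩
        · refine ⟨hav, hbv, hab, Or.inr ?_⟩
          rw [har]
          exact T.allg_child_root hall hbv (fun h => hab (har.trans h.symm))
        · refine ⟨hav, hbv, hab, Or.inl ?_⟩
          rw [hbr]
          exact T.allg_child_root hall hav (fun h => hab (h.trans hbr.symm))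
    · show T.verts = _
      ext v
      simp only [Set.mem_setOf_eq]
      exact ⟨fun h => ⟨h, hall v h⟩, fun h => h.1⟩
  | succ n ih =>
    intro T hn
    have hfin : {v ∈ T.verts | T.glabel v = false}.Finite :=
      T.finite.subset (Set.sep_subset _ _)
    have hne : {v ∈ T.verts | T.glabel v = false}.Nonempty := by
      rw [← Set.ncard_pos hfin, hn]
      exact Nat.succ_pos n
    obtain ⟨u, hu, humax⟩ := Set.exists_max_image _ T.depth hfin hne
    simp only [Set.mem_setOf_eq] at hu
    obtain ⟨hu1, hu2⟩ := hu
    obtain ⟨T', hT'v, hT'r, hT'g, hT'minor⟩ := T.step u hu1 hu2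
      (fun v hv hg => humax v (show v ∈ {v ∈ T.verts | T.glabel v = false} from ⟨hv, hg⟩))
    have hcount : {v ∈ T'.verts | T'.glabel v = false}.ncard = n := by
      rw [hT'v, hT'g]
      have heq : {v ∈ T.verts \ {u} | T.glabel v = false} =
          {v ∈ T.verts | T.glabel v = false} \ {u} := by
        ext v
        simp only [Set.mem_setOf_eq, Set.mem_diff, Set.mem_singleton_iff]
        tauto
      rw [heq, Set.ncard_diff_singleton_of_mem (show u ∈ {v ∈ T.verts | T.glabel v = false} from ⟨hu1, hu2⟩), hn]
      omega
    obtain ⟨H, hH1, hH2, hH3⟩ := ih T' hcount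
    refine ⟨H, FGraph.isVertexMinor_trans hH1 hT'minor, by rw [← hT'r]; exact hH2, ?_⟩
    rw [hH3, hT'v, hT'g]
    ext v
    simp only [Set.mem_setOf_eq, Set.mem_diff, Set.mem_singleton_iff]
    constructor
    · rintro ⟨⟨hv, _⟩, hg⟩
      exact ⟨hv, hg⟩
    · rintro ⟨hv, hg⟩
      exact ⟨⟨hv, fun h => by rw [h, hu2] at hg; exact Bool.noConfusion hg⟩, hg⟩

/-- if a repeater tree with exactly `N` vertices labelled `g` is a
vertex-minor of `G`, then a star graph on `N` vertices is a vertex-minor of `G`. -/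
theorem star_vertexMinor_of_repeaterTree {α : Type*} (G : FGraph α)
    (T : RepeaterTree α) (N : ℕ)
    (hN : {v ∈ T.verts | T.glabel v = true}.ncard = N)
    (hminor : FGraph.IsVertexMinor T.toFGraph G) :
    ∃ (H : FGraph α) (c : α),
      FGraph.IsVertexMinor H G ∧ H.IsStar c ∧ H.verts.ncard = N := by
  obtain ⟨H, h1, h2, h3⟩ := RepeaterTree.star_minor _ T rfl
  exact ⟨H, T.root, FGraph.isVertexMinor_trans h1 hminor, h2, by rw [h3]; exact hN⟩
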